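/- Let s ≥ 3 be odd, and let R = ⟨a,b⟩ ≤ Sym(4s) with a = (2s−1,2s)(4s−1,4s), b = (1,3,…,4s−1,2,4,…,4s). Write a_k = a^{b^k}. Define ρ on the complex s-dimensional space with basis e₁,…,e_s by, for x = a₁^{ε₁}···a_s^{ε_s} b^m, e_i^{ρ(x)} = (−1)^{−ε_{2−2i} + Σ_{k=1}^{s} ε_k} · e_{i + m(s−1)/2} (subscripts mod s). Then ρ is a representation of R and ρ(ab) + ρ(b) = 2E_{1,(s+1)/2}, which is a nonzero nilpotent (hence non-diagonalizable) matrix. -/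

import Mathlib

namespace Stmt11Aux


def cnat (s n : ℕ) : ℕ :=
  if n % (4*s) < 2*s then 2*(n % (4*s)) else 2*(n % (4*s)) - (4*s) + 1

lemma cnat_lt (s n : ℕ) (hs : 0 < s) : cnat s n < 4*s := by
  have h := Nat.mod_lt n (show 0 < 4*s by omega)
  unfold cnat; split <;> omega

variable (s : ℕ) [NeZero s]

lemma spos : 0 < s := Nat.pos_of_ne_zero (NeZero.ne s)

def c (n : ℕ) : Fin (4*s) := ⟨cnat s n, cnat_lt s n (spos s)⟩

lemma c_val (n : ℕ) : (c s n : ℕ) = cnat s n := rfl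

lemma c_congr {m n : ℕ} (h : m % (4*s) = n % (4*s)) : c s m = c s n := by
  apply Fin.ext; simp only [c_val, cnat, h]

lemma c_add4s (n : ℕ) : c s (n + 4*s) = c s n :=
  c_congr s (Nat.add_mod_right n (4*s))

lemma c_congr4 {p q : ℕ} (h : p = q ∨ p = q + 4*s ∨ q = p + 4*s) : c s p = c s q := by
  rcases h with rfl | rfl | rfl
  · rfl
  · exact c_add4s s q
  · exact (c_add4s s p).symm

lemma c_mod (n : ℕ) : c s (n % (4*s)) = c s n :=
  c_congr s (Nat.mod_mod_of_dvd n dvd_rfl)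

lemma c_inj {m n : ℕ} (h : c s m = c s n) : m % (4*s) = n % (4*s) := by
  have hs := spos s
  have h1 := Nat.mod_lt m (show 0 < 4*s by omega)
  have h2 := Nat.mod_lt n (show 0 < 4*s by omega)
  have h3 := congrArg Fin.val h
  simp only [c_val, cnat] at h3
  split at h3 <;> split at h3 <;> omega

lemma c_surj (x : Fin (4*s)) : ∃ n, c s n = x := by
  have hs := spos s
  have hx := x.isLt
  rcases Nat.even_or_odd (x : ℕ) with he | ho
  · refine ⟨(x : ℕ)/2, Fin.ext ?_⟩
    have h : ((x:ℕ)/2) % (4*s) = (x:ℕ)/2 := Nat.mod_eq_of_lt (by omega)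
    simp only [c_val, cnat, h]
    obtain ⟨t, ht⟩ := he
    split <;> omega
  · refine ⟨2*s + (x:ℕ)/2, Fin.ext ?_⟩
    have h : (2*s + (x:ℕ)/2) % (4*s) = 2*s + (x:ℕ)/2 := Nat.mod_eq_of_lt (by omega)
    simp only [c_val, cnat, h]
    obtain ⟨t, ht⟩ := ho
    split <;> omega

lemma mod_two_mul {M x : ℕ} (h : x < 2*M) : x % M = if x < M then x else x - M := by
  split
  · exact Nat.mod_eq_of_lt ‹_›
  · rw [Nat.mod_eq_sub_mod (by omega)]
    exact Nat.mod_eq_of_lt (by omega)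


section WithB
variable {s : ℕ} [NeZero s] {a b : Equiv.Perm (Fin (4*s))}

lemma b_c (hs3 : 3 ≤ s)
    (hb : ∀ i : Fin (4 * s), (b i : ℕ) =
      if (i : ℕ) % 2 = 0 then (if (i : ℕ) = 4 * s - 2 then 1 else (i : ℕ) + 2)
      else (if (i : ℕ) = 4 * s - 1 then 0 else (i : ℕ) + 2))
    (n : ℕ) : b (c s n) = c s (n + 1) := by
  rw [← c_mod s n, ← c_congr s (show (n % (4*s) + 1) % (4*s) = (n+1) % (4*s) from
    Nat.ModEq.add_right 1 (Nat.mod_modEq n (4*s)))]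
  set r := n % (4*s) with hrdef
  have hr : r < 4*s := Nat.mod_lt n (by omega)
  apply Fin.ext
  rw [hb]
  have h1 : r % (4*s) = r := Nat.mod_eq_of_lt hr
  have h2 : (r+1) % (4*s) = if r + 1 = 4*s then 0 else r+1 := by
    split
    · rw [‹r+1 = 4*s›]; exact Nat.mod_self _
    · exact Nat.mod_eq_of_lt (by omega)
  simp only [c_val, cnat, h1, h2]
  split_ifs <;> omega

lemma bpow_c (hs3 : 3 ≤ s)
    (hb : ∀ i : Fin (4 * s), (b i : ℕ) =
      if (i : ℕ) % 2 = 0 then (if (i : ℕ) = 4 * s - 2 then 1 else (i : ℕ) + 2)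
      else (if (i : ℕ) = 4 * s - 1 then 0 else (i : ℕ) + 2))
    (m n : ℕ) : (b ^ m) (c s n) = c s (n + m) := by
  induction m with
  | zero => rfl
  | succ k ih =>
    rw [pow_succ', Equiv.Perm.mul_apply, ih, b_c hs3 hb]; exact c_congr4 s (by omega)
end WithB

lemma mod2_of_mod4' (x : ℕ) : x % s = x % (2*s) % s :=
  (Nat.mod_mod_of_dvd x ⟨2, by ring⟩).symm

def A (t : ℕ) : Equiv.Perm (Fin (4*s)) := Equiv.swap (c s t) (c s (t + 2*s))

lemma mod4_add2 (hs3 : 3 ≤ s) (x : ℕ) :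
    (x + 2*s) % (4*s) = if x % (4*s) < 2*s then x % (4*s) + 2*s else x % (4*s) - 2*s := by
  have hx : x % (4*s) < 4*s := Nat.mod_lt x (by omega)
  have h1 : (x % (4*s) + 2*s) % (4*s) = (x + 2*s) % (4*s) :=
    Nat.ModEq.add_right (2*s) (Nat.mod_modEq x (4*s))
  rw [← h1, mod_two_mul (by omega)]
  split_ifs <;> omega

lemma mod2_of_mod4 (x : ℕ) : x % (2*s) = x % (4*s) % (2*s) :=
  (Nat.mod_mod_of_dvd x ⟨2, by ring⟩).symm

lemma A_apply (hs3 : 3 ≤ s) (t n : ℕ) :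
    A s t (c s n) = if n % (2*s) = t % (2*s) then c s (n + 2*s) else c s n := by
  have hsp := spos s
  have hn4 : n % (4*s) < 4*s := Nat.mod_lt n (by omega)
  have ht4 : t % (4*s) < 4*s := Nat.mod_lt t (by omega)
  have hn2 : n % (2*s) = n % (4*s) % (2*s) := mod2_of_mod4 s n
  have ht2 : t % (2*s) = t % (4*s) % (2*s) := mod2_of_mod4 s t
  have hn2' := mod_two_mul (M := 2*s) (x := n % (4*s)) (by omega)
  have ht2' := mod_two_mul (M := 2*s) (x := t % (4*s)) (by omega)
  have hadd := mod4_add2 s hs3 t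
  by_cases h1 : n % (4*s) = t % (4*s)
  · rw [show c s n = c s t from c_congr s h1]
    simp only [A, Equiv.swap_apply_left]
    rw [if_pos (by rw [hn2, ht2, h1])]
    exact c_congr s (Nat.ModEq.add_right (2*s) (show t ≡ n [MOD 4*s] from h1.symm))
  · by_cases h2 : n % (4*s) = (t + 2*s) % (4*s)
    · rw [show c s n = c s (t + 2*s) from c_congr s h2]
      simp only [A, Equiv.swap_apply_right]
      rw [if_pos (by rw [hn2, h2, ← mod2_of_mod4, Nat.add_mod_right])]
      refine c_congr s ?_
      have h5 : (t + 2*s + 2*s) % (4*s) = t % (4*s) := by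
        rw [show t + 2*s + 2*s = t + 4*s by ring, Nat.add_mod_right]
      calc t % (4*s) = (t + 2*s + 2*s) % (4*s) := h5.symm
        _ = (n + 2*s) % (4*s) := Nat.ModEq.add_right (2*s) (show t + 2*s ≡ n [MOD 4*s] from h2.symm)
    · simp only [A]
      rw [Equiv.swap_apply_of_ne_of_ne (fun hc => h1 (c_inj s hc)) (fun hc => h2 (c_inj s hc))]
      rw [if_neg ?_]
      intro hc
      rw [hn2, ht2, hn2', ht2'] at hc
      rw [hadd] at h2
      split_ifs at hc h2 <;> omega

lemma A_swap_comm (hs3 : 3 ≤ s) (t : ℕ) : A s (t + 2*s) = A s t := by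
  simp only [A]
  rw [show c s (t + 2*s + 2*s) = c s t from
    c_congr s (by rw [show t + 2*s + 2*s = t + 4*s by ring, Nat.add_mod_right])]
  exact Equiv.swap_comm _ _

section WithB2
variable {a b : Equiv.Perm (Fin (4*s))}

lemma conjA (hs3 : 3 ≤ s)
    (hb : ∀ i : Fin (4 * s), (b i : ℕ) =
      if (i : ℕ) % 2 = 0 then (if (i : ℕ) = 4 * s - 2 then 1 else (i : ℕ) + 2)
      else (if (i : ℕ) = 4 * s - 1 then 0 else (i : ℕ) + 2))
    (j t : ℕ) : b^j * A s t * (b^j)⁻¹ = A s (t + j) := by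
  simp only [A]
  rw [← Equiv.swap_apply_apply, bpow_c hs3 hb, bpow_c hs3 hb]
  congr 1
  exact congrArg (c s) (by ring)

lemma a_eq (hs3 : 3 ≤ s)
    (ha : a = Equiv.swap ⟨2 * s - 2, (by omega : 2 * s - 2 < 4 * s + 0)⟩ ⟨2 * s - 1, (by omega : 2 * s - 1 < 4 * s + 0)⟩ *
      Equiv.swap ⟨4 * s - 2, (by omega : 4 * s - 2 < 4 * s + 0)⟩ ⟨4 * s - 1, (by omega : 4 * s - 1 < 4 * s + 0)⟩) :
    a = A s (s-1) * A s (2*s-1) := by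
  rw [ha]
  simp only [A]
  congr 1
  · congr 1 <;>
      (apply Fin.ext; simp only [c_val, cnat]; rw [Nat.mod_eq_of_lt (by omega)];
        split_ifs <;> omega)
  · congr 1 <;>
      (apply Fin.ext; simp only [c_val, cnat]; rw [Nat.mod_eq_of_lt (by omega)];
        split_ifs <;> omega)

lemma g_eq (hs3 : 3 ≤ s)
    (ha : a = Equiv.swap ⟨2 * s - 2, (by omega : 2 * s - 2 < 4 * s + 0)⟩ ⟨2 * s - 1, (by omega : 2 * s - 1 < 4 * s + 0)⟩ *
      Equiv.swap ⟨4 * s - 2, (by omega : 4 * s - 2 < 4 * s + 0)⟩ ⟨4 * s - 1, (by omega : 4 * s - 1 < 4 * s + 0)⟩)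
    (hb : ∀ i : Fin (4 * s), (b i : ℕ) =
      if (i : ℕ) % 2 = 0 then (if (i : ℕ) = 4 * s - 2 then 1 else (i : ℕ) + 2)
      else (if (i : ℕ) = 4 * s - 1 then 0 else (i : ℕ) + 2))
    (j : ℕ) : b^j * a * (b^j)⁻¹ = A s ((s-1) + j) * A s ((2*s-1) + j) := by
  rw [a_eq s hs3 ha]
  have : b^j * (A s (s-1) * A s (2*s-1)) * (b^j)⁻¹
      = (b^j * A s (s-1) * (b^j)⁻¹) * (b^j * A s (2*s-1) * (b^j)⁻¹) := by group
  rw [this, conjA s hs3 hb, conjA s hs3 hb]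

lemma g_apply (hs3 : 3 ≤ s)
    (ha : a = Equiv.swap ⟨2 * s - 2, (by omega : 2 * s - 2 < 4 * s + 0)⟩ ⟨2 * s - 1, (by omega : 2 * s - 1 < 4 * s + 0)⟩ *
      Equiv.swap ⟨4 * s - 2, (by omega : 4 * s - 2 < 4 * s + 0)⟩ ⟨4 * s - 1, (by omega : 4 * s - 1 < 4 * s + 0)⟩)
    (hb : ∀ i : Fin (4 * s), (b i : ℕ) =
      if (i : ℕ) % 2 = 0 then (if (i : ℕ) = 4 * s - 2 then 1 else (i : ℕ) + 2)
      else (if (i : ℕ) = 4 * s - 1 then 0 else (i : ℕ) + 2))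
    (j n : ℕ) (hj : 1 ≤ j) :
    (b^j * a * (b^j)⁻¹) (c s n) = if n % s = (j-1) % s then c s (n + 2*s) else c s n := by
  have hsp := spos s
  have hu4 : n % (2*s) < 2*s := Nat.mod_lt n (by omega)
  have hv4 : (j-1) % (2*s) < 2*s := Nat.mod_lt (j-1) (by omega)
  have e1 : ((2*s-1) + j) % (2*s) = (j-1) % (2*s) := by
    rw [show (2*s-1) + j = (j-1) + 2*s by omega, Nat.add_mod_right]
  have e2 : ((s-1) + j) % (2*s) = ((j-1) % (2*s) + s) % (2*s) := by
    rw [show (s-1) + j = (j-1) + s by omega]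
    exact (Nat.ModEq.add_right s (Nat.mod_modEq (j-1) (2*s))).symm
  have e4 : ((j-1) % (2*s) + s) % (2*s)
      = if (j-1) % (2*s) + s < 2*s then (j-1) % (2*s) + s else (j-1) % (2*s) + s - 2*s :=
    mod_two_mul (by omega)
  have e5 : n % s = n % (2*s) % s := mod2_of_mod4' s n
  have e6 : (j-1) % s = (j-1) % (2*s) % s := mod2_of_mod4' s (j-1)
  have e7 : n % (2*s) % s = if n % (2*s) < s then n % (2*s) else n % (2*s) - s :=
    mod_two_mul (by omega)
  have e8 : (j-1) % (2*s) % s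
      = if (j-1) % (2*s) < s then (j-1) % (2*s) else (j-1) % (2*s) - s :=
    mod_two_mul (by omega)
  have e9 : (n + 2*s) % (2*s) = n % (2*s) := Nat.add_mod_right n (2*s)
  rw [g_eq s hs3 ha hb, Equiv.Perm.mul_apply, A_apply s hs3, e1]
  by_cases hB : n % (2*s) = (j-1) % (2*s)
  · rw [if_pos hB, A_apply s hs3, e9, e2, e4, if_neg (by split_ifs <;> omega),
      if_pos (by rw [e5, e6, hB])]
  · rw [if_neg hB, A_apply s hs3, e2, e4]
    by_cases hC : n % (2*s)
        = (if (j-1) % (2*s) + s < 2*s then (j-1) % (2*s) + s else (j-1) % (2*s) + s - 2*s)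
    · rw [if_pos hC, if_pos (by rw [e5, e6, e7, e8]; split_ifs at hC ⊢ <;> omega)]
    · rw [if_neg hC, if_neg (by rw [e5, e6, e7, e8]; split_ifs at hC ⊢ <;> omega)]

end WithB2

section WithB3
variable {a b : Equiv.Perm (Fin (4*s))}

/-- The word appearing in the decomposition. -/
def W (a b : Equiv.Perm (Fin (4*s))) (ε : ZMod s → ℕ) : Equiv.Perm (Fin (4*s)) :=
  (List.ofFn fun k : Fin s =>
    (b ^ (s - (k : ℕ)) * a * (b ^ (s - (k : ℕ)))⁻¹) ^ (ε ((s - (k : ℕ) : ℕ) : ZMod s))).prod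

lemma fixlist (F : Fin s → Equiv.Perm (Fin (4*s))) (x : Fin (4*s)) :
    ∀ (l : List (Fin s)), (∀ k ∈ l, F k x = x) → (l.map F).prod x = x := by
  intro l
  induction l with
  | nil => intro _; simp
  | cons hd tl ih =>
    intro h
    rw [List.map_cons, List.prod_cons, Equiv.Perm.mul_apply, ih (fun k hk => h k (by simp [hk])),
      h hd (by simp)]

lemma W_apply (hs3 : 3 ≤ s)
    (ha : a = Equiv.swap ⟨2 * s - 2, (by omega : 2 * s - 2 < 4 * s + 0)⟩ ⟨2 * s - 1, (by omega : 2 * s - 1 < 4 * s + 0)⟩ *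
      Equiv.swap ⟨4 * s - 2, (by omega : 4 * s - 2 < 4 * s + 0)⟩ ⟨4 * s - 1, (by omega : 4 * s - 1 < 4 * s + 0)⟩)
    (hb : ∀ i : Fin (4 * s), (b i : ℕ) =
      if (i : ℕ) % 2 = 0 then (if (i : ℕ) = 4 * s - 2 then 1 else (i : ℕ) + 2)
      else (if (i : ℕ) = 4 * s - 1 then 0 else (i : ℕ) + 2))
    (ε : ZMod s → ℕ) (hε : ∀ j, ε j ≤ 1) (n : ℕ) :
    W s a b ε (c s n) = c s (n + 2*s * ε (((n : ℕ) : ZMod s) + 1)) := by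
  have hsp := spos s
  have hns : n % s < s := Nat.mod_lt n (by omega)
  set F : Fin s → Equiv.Perm (Fin (4*s)) := fun k =>
    (b ^ (s - (k : ℕ)) * a * (b ^ (s - (k : ℕ)))⁻¹) ^ (ε ((s - (k : ℕ) : ℕ) : ZMod s)) with hF
  set k₀ : Fin s := ⟨s - 1 - n % s, by omega⟩ with hk₀
  have hcast : ((s - (k₀ : ℕ) : ℕ) : ZMod s) = ((n : ℕ) : ZMod s) + 1 := by
    have : (s - (k₀ : ℕ) : ℕ) = n % s + 1 := by simp only [hk₀]; omega
    rw [this]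
    push_cast [ZMod.natCast_mod]
    ring
  -- other factors fix points with the same residue
  have hfix : ∀ (k : Fin s), k ≠ k₀ → ∀ m : ℕ, m % s = n % s → F k (c s m) = c s m := by
    intro k hk m hm
    have hk' : (k : ℕ) < s := k.isLt
    have he : ε ((s - (k : ℕ) : ℕ) : ZMod s) = 0 ∨ ε ((s - (k : ℕ) : ℕ) : ZMod s) = 1 := by
      have := hε ((s - (k : ℕ) : ℕ) : ZMod s); omega
    rcases he with he | he
    · simp only [hF, he, pow_zero, Equiv.Perm.one_apply]
    · simp only [hF, he, pow_one]
      rw [g_apply s hs3 ha hb (s - (k : ℕ)) m (by omega)]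
      rw [if_neg ?_]
      rw [Nat.mod_eq_of_lt (show s - (k:ℕ) - 1 < s by omega), hm]
      intro hc
      exact hk (Fin.ext (show (k : ℕ) = s - 1 - n % s by omega))
  -- split the list at k₀
  have hW : W s a b ε = ((List.finRange s).map F).prod := by
    rw [W, List.ofFn_eq_map]
  obtain ⟨l₁, l₂, hl⟩ := List.append_of_mem (List.mem_finRange k₀)
  have hnd := List.nodup_finRange s
  rw [hl] at hnd
  have hnotl₁ : k₀ ∉ l₁ := fun hmem =>
    (List.disjoint_of_nodup_append hnd) hmem (by simp)
  have hnotl₂ : k₀ ∉ l₂ := by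
    have := (List.nodup_append.mp hnd).2.1
    exact (List.nodup_cons.mp this).1
  rw [hW, hl, List.map_append, List.map_cons, List.prod_append, List.prod_cons,
    Equiv.Perm.mul_apply, Equiv.Perm.mul_apply,
    fixlist s F _ l₂ (fun k hk => hfix k (fun h => hnotl₂ (h ▸ hk)) n rfl)]
  have he : ε ((s - (k₀ : ℕ) : ℕ) : ZMod s) = 0 ∨ ε ((s - (k₀ : ℕ) : ℕ) : ZMod s) = 1 := by
    have := hε ((s - (k₀ : ℕ) : ℕ) : ZMod s); omega
  rcases he with he | he
  · have hFk : F k₀ (c s n) = c s n := by simp only [hF, he, pow_zero, Equiv.Perm.one_apply]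
    rw [hFk, fixlist s F _ l₁ (fun k hk => hfix k (fun h => hnotl₁ (h ▸ hk)) n rfl)]
    rw [hcast] at he
    rw [he]
    exact c_congr4 s (by omega)
  · have hFk : F k₀ (c s n) = c s (n + 2*s) := by
      simp only [hF, he, pow_one]
      rw [g_apply s hs3 ha hb (s - (k₀ : ℕ)) n (by simp only [hk₀]; omega)]
      rw [if_pos ?_]
      have h1 : s - (k₀ : ℕ) - 1 = n % s := by simp only [hk₀]; omega
      rw [h1, Nat.mod_eq_of_lt hns]
    rw [hFk, fixlist s F _ l₁ (fun k hk => hfix k (fun h => hnotl₁ (h ▸ hk)) (n + 2*s)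
      (by rw [Nat.add_mul_mod_self_right]))]
    rw [hcast] at he
    rw [he]
    exact c_congr4 s (by omega)

lemma bW_apply (hs3 : 3 ≤ s)
    (ha : a = Equiv.swap ⟨2 * s - 2, (by omega : 2 * s - 2 < 4 * s + 0)⟩ ⟨2 * s - 1, (by omega : 2 * s - 1 < 4 * s + 0)⟩ *
      Equiv.swap ⟨4 * s - 2, (by omega : 4 * s - 2 < 4 * s + 0)⟩ ⟨4 * s - 1, (by omega : 4 * s - 1 < 4 * s + 0)⟩)
    (hb : ∀ i : Fin (4 * s), (b i : ℕ) =
      if (i : ℕ) % 2 = 0 then (if (i : ℕ) = 4 * s - 2 then 1 else (i : ℕ) + 2)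
      else (if (i : ℕ) = 4 * s - 1 then 0 else (i : ℕ) + 2))
    (ε : ZMod s → ℕ) (hε : ∀ j, ε j ≤ 1) (m n : ℕ) :
    (b ^ m * W s a b ε) (c s n) = c s (n + m + 2*s * ε (((n : ℕ) : ZMod s) + 1)) := by
  rw [Equiv.Perm.mul_apply, W_apply s hs3 ha hb ε hε n, bpow_c hs3 hb]
  exact c_congr4 s (by omega)

lemma perm_eq_of_c {x y : Equiv.Perm (Fin (4*s))} (h : ∀ n : ℕ, x (c s n) = y (c s n)) :
    x = y := by
  apply Equiv.ext
  intro pt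
  obtain ⟨n, rfl⟩ := c_surj s pt
  exact h n

end WithB3

section WithB4
variable {a b : Equiv.Perm (Fin (4*s))}

lemma zcond (n : ℕ) : (((n:ℕ) : ZMod s) + 1 = 0) ↔ n % s = s - 1 := by
  have hsp := spos s
  have hns : n % s < s := Nat.mod_lt n (by omega)
  rw [show ((n:ℕ) : ZMod s) = ((n % s : ℕ) : ZMod s) from (ZMod.natCast_mod n s).symm,
    show (((n % s : ℕ) : ZMod s) + 1) = ((n % s + 1 : ℕ) : ZMod s) by push_cast; ring,
    ZMod.natCast_eq_zero_iff]
  constructor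
  · intro h
    have h1 : s ≤ n % s + 1 := Nat.le_of_dvd (by omega) h
    omega
  · intro h
    rw [h, show s - 1 + 1 = s by omega]

lemma a_apply (hs3 : 3 ≤ s)
    (ha : a = Equiv.swap ⟨2 * s - 2, (by omega : 2 * s - 2 < 4 * s + 0)⟩ ⟨2 * s - 1, (by omega : 2 * s - 1 < 4 * s + 0)⟩ *
      Equiv.swap ⟨4 * s - 2, (by omega : 4 * s - 2 < 4 * s + 0)⟩ ⟨4 * s - 1, (by omega : 4 * s - 1 < 4 * s + 0)⟩)
    (n : ℕ) : a (c s n) = if n % s = s - 1 then c s (n + 2*s) else c s n := by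
  have hsp := spos s
  have hu4 : n % (2*s) < 2*s := Nat.mod_lt n (by omega)
  have e5 : n % s = n % (2*s) % s := mod2_of_mod4' s n
  have e7 : n % (2*s) % s = if n % (2*s) < s then n % (2*s) else n % (2*s) - s :=
    mod_two_mul (by omega)
  have e9 : (n + 2*s) % (2*s) = n % (2*s) := Nat.add_mod_right n (2*s)
  have eA : (2*s-1) % (2*s) = 2*s-1 := Nat.mod_eq_of_lt (by omega)
  have eB : (s-1) % (2*s) = s-1 := Nat.mod_eq_of_lt (by omega)
  have e10 : n % s = if n % (2*s) < s then n % (2*s) else n % (2*s) - s := by rw [e5, e7]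
  rw [a_eq s hs3 ha, Equiv.Perm.mul_apply, A_apply s hs3, eA]
  by_cases hB : n % (2*s) = 2*s-1
  · rw [if_pos hB, A_apply s hs3, e9, eB, if_neg (by omega),
      if_pos (by rw [e10]; split_ifs <;> omega)]
  · rw [if_neg hB, A_apply s hs3, eB]
    by_cases hC : n % (2*s) = s-1
    · rw [if_pos hC, if_pos (by rw [e10]; split_ifs <;> omega)]
    · rw [if_neg hC, if_neg (by rw [e10]; split_ifs <;> omega)]

/-- decomposability -/
def Decomp (a b : Equiv.Perm (Fin (4*s))) (x : Equiv.Perm (Fin (4*s))) : Prop :=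
  ∃ ε m, (∀ j : ZMod s, ε j ≤ 1) ∧ 1 ≤ m ∧ m ≤ 2*s ∧ x = b ^ m * W s a b ε

variable (hs3 : 3 ≤ s)
  (ha : a = Equiv.swap ⟨2 * s - 2, (by omega : 2 * s - 2 < 4 * s + 0)⟩ ⟨2 * s - 1, (by omega : 2 * s - 1 < 4 * s + 0)⟩ *
      Equiv.swap ⟨4 * s - 2, (by omega : 4 * s - 2 < 4 * s + 0)⟩ ⟨4 * s - 1, (by omega : 4 * s - 1 < 4 * s + 0)⟩)
  (hb : ∀ i : Fin (4 * s), (b i : ℕ) =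
      if (i : ℕ) % 2 = 0 then (if (i : ℕ) = 4 * s - 2 then 1 else (i : ℕ) + 2)
      else (if (i : ℕ) = 4 * s - 1 then 0 else (i : ℕ) + 2))
include hs3 ha hb

lemma decomp_b_eq : b = b ^ 1 * W s a b (fun _ => 0) := by
  apply perm_eq_of_c s
  intro n
  rw [b_c hs3 hb, bW_apply s hs3 ha hb _ (fun _ => Nat.zero_le _) 1 n]
  exact c_congr4 s (by omega)

lemma decomp_a_eq : a = b ^ (2*s) * W s a b (fun j => if j = 0 then 0 else 1) := by
  apply perm_eq_of_c s
  intro n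
  have hεa : ∀ j : ZMod s, (fun j : ZMod s => if j = 0 then 0 else 1) j ≤ 1 := by
    intro j; by_cases hj : j = 0 <;> simp [hj]
  rw [a_apply s hs3 ha, bW_apply s hs3 ha hb _ hεa (2*s) n]
  by_cases h : n % s = s - 1
  · rw [if_pos h, if_pos ((zcond s n).mpr h)]
    exact c_congr4 s (by omega)
  · rw [if_neg h, if_neg (fun hc => h ((zcond s n).mp hc))]
    exact c_congr4 s (by omega)

lemma decomp_ba_eq : b * a = b ^ 1 * W s a b (fun j => if j = 0 then 1 else 0) := by
  apply perm_eq_of_c s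
  intro n
  have hεa : ∀ j : ZMod s, (fun j : ZMod s => if j = 0 then 1 else 0) j ≤ 1 := by
    intro j; by_cases hj : j = 0 <;> simp [hj]
  rw [Equiv.Perm.mul_apply, a_apply s hs3 ha, bW_apply s hs3 ha hb _ hεa 1 n]
  by_cases h : n % s = s - 1
  · rw [if_pos h, b_c hs3 hb, if_pos ((zcond s n).mpr h)]
    exact c_congr4 s (by omega)
  · rw [if_neg h, b_c hs3 hb, if_neg (fun hc => h ((zcond s n).mp hc))]
    exact c_congr4 s (by omega)

lemma decomp_one_eq : (1 : Equiv.Perm (Fin (4*s))) = b ^ (2*s) * W s a b (fun _ => 1) := by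
  apply perm_eq_of_c s
  intro n
  rw [Equiv.Perm.one_apply, bW_apply s hs3 ha hb _ (fun _ => le_refl _) (2*s) n]
  exact c_congr4 s (by omega)

lemma decomp_mul_eq {x y : Equiv.Perm (Fin (4*s))} {ε ε' : ZMod s → ℕ} {m m' : ℕ}
    (hε : ∀ j, ε j ≤ 1) (hε' : ∀ j, ε' j ≤ 1)
    (hx : x = b ^ m * W s a b ε) (hy : y = b ^ m' * W s a b ε') :
    x * y = b ^ (if m + m' ≤ 2*s then m + m' else m + m' - 2*s) *
      W s a b (fun j => (ε (j + (m' : ZMod s)) + ε' j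
        + (if m + m' ≤ 2*s then 0 else 1)) % 2) := by
  have hε'' : ∀ j : ZMod s, (ε (j + (m' : ZMod s)) + ε' j
      + (if m + m' ≤ 2*s then 0 else 1)) % 2 ≤ 1 := fun j => by
    have := Nat.mod_lt (ε (j + (m' : ZMod s)) + ε' j + (if m + m' ≤ 2*s then 0 else 1))
      (show 0 < 2 by omega)
    omega
  apply perm_eq_of_c s
  intro n
  rw [Equiv.Perm.mul_apply, hx, hy, bW_apply s hs3 ha hb ε' hε' m' n,
    bW_apply s hs3 ha hb ε hε m _,
    bW_apply s hs3 ha hb _ hε'' _ n]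
  have harg : (((n + m' + 2*s*(ε' (((n:ℕ) : ZMod s) + 1)) : ℕ)) : ZMod s) + 1
      = (((n:ℕ) : ZMod s) + 1) + ((m' : ℕ) : ZMod s) := by
    push_cast [ZMod.natCast_self]
    ring
  rw [harg]
  have hX : ε ((((n:ℕ) : ZMod s) + 1) + ((m' : ℕ) : ZMod s)) ≤ 1 := hε _
  have hY : ε' (((n:ℕ) : ZMod s) + 1) ≤ 1 := hε' _
  set X := ε ((((n:ℕ) : ZMod s) + 1) + ((m' : ℕ) : ZMod s)) with hXdef
  set Y := ε' (((n:ℕ) : ZMod s) + 1) with hYdef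
  have hsp := spos s
  have hX01 : X = 0 ∨ X = 1 := by omega
  have hY01 : Y = 0 ∨ Y = 1 := by omega
  by_cases h2 : m + m' ≤ 2*s
  · simp only [if_pos h2]
    rcases hX01 with h|h <;> rcases hY01 with h'|h' <;> rw [h, h'] <;>
      exact c_congr4 s (by omega)
  · simp only [if_neg h2]
    rcases hX01 with h|h <;> rcases hY01 with h'|h' <;> rw [h, h'] <;>
      exact c_congr4 s (by omega)

lemma decomp_mul' {x y : Equiv.Perm (Fin (4*s))}
    (hx : Decomp s a b x) (hy : Decomp s a b y) : Decomp s a b (x * y) := by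
  obtain ⟨ε, m, hε, hm1, hm2, hxe⟩ := hx
  obtain ⟨ε', m', hε', hm1', hm2', hye⟩ := hy
  have hsp := spos s
  refine ⟨_, _, ?_, ?_, ?_, decomp_mul_eq s hs3 ha hb hε hε' hxe hye⟩
  · intro j
    have := Nat.mod_lt (ε (j + (m' : ZMod s)) + ε' j + (if m + m' ≤ 2*s then 0 else 1))
      (show 0 < 2 by omega)
    omega
  · split <;> omega
  · split <;> omega

lemma decomp_pow {x : Equiv.Perm (Fin (4*s))} (hx : Decomp s a b x) :
    ∀ k : ℕ, Decomp s a b (x ^ k) := by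
  intro k
  induction k with
  | zero =>
    rw [pow_zero]
    have hsp := spos s
    exact ⟨_, 2*s, fun _ => le_refl _, by omega, le_refl _, decomp_one_eq s hs3 ha hb⟩
  | succ k ih =>
    rw [pow_succ]
    exact decomp_mul' s hs3 ha hb ih hx

lemma decomp_inv {x : Equiv.Perm (Fin (4*s))} (hx : Decomp s a b x) :
    Decomp s a b x⁻¹ := by
  have ho : 0 < orderOf x := orderOf_pos x
  have hxo : x⁻¹ = x ^ (orderOf x - 1) := by
    apply inv_eq_of_mul_eq_one_right
    rw [← pow_succ', show orderOf x - 1 + 1 = orderOf x by omega, pow_orderOf_eq_one]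
  rw [hxo]
  exact decomp_pow s hs3 ha hb hx _

lemma decomp_closure {x : Equiv.Perm (Fin (4*s))}
    (hx : x ∈ Subgroup.closure ({a, b} : Set (Equiv.Perm (Fin (4*s))))) :
    Decomp s a b x := by
  induction hx using Subgroup.closure_induction with
  | mem z hz =>
    have hsp := spos s
    simp only [Set.mem_insert_iff, Set.mem_singleton_iff] at hz
    rcases hz with rfl | rfl
    · exact ⟨_, 2*s, fun j => by by_cases hj : j = 0 <;> simp [hj], by omega, le_refl _,
        decomp_a_eq s hs3 ha hb⟩
    · exact ⟨_, 1, fun _ => Nat.zero_le _, le_refl _, by omega, decomp_b_eq s hs3 ha hb⟩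
  | one =>
    have hsp := spos s
    exact ⟨_, 2*s, fun _ => le_refl _, by omega, le_refl _, decomp_one_eq s hs3 ha hb⟩
  | mul u v hu hv hud hvd => exact decomp_mul' s hs3 ha hb hud hvd
  | inv u hu hud => exact decomp_inv s hs3 ha hb hud

end WithB4

section MatrixPart

lemma pow_neg_one_congr {u v : ℕ} (h : u % 2 = v % 2) : (-1 : ℂ) ^ u = (-1) ^ v := by
  rcases Nat.even_or_odd u with he | ho
  · have hv : Even v := by rw [Nat.even_iff] at *; omega
    rw [he.neg_one_pow, hv.neg_one_pow]
  · have hv : Odd v := by rw [Nat.odd_iff] at *; omega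
    rw [ho.neg_one_pow, hv.neg_one_pow]

lemma matMul (C C' : ZMod s) (f f' : ZMod s → ℂ) :
    (Matrix.of fun i j : ZMod s => if i = j + C then f j else 0) *
      (Matrix.of fun i j : ZMod s => if i = j + C' then f' j else 0) =
    Matrix.of fun i j : ZMod s => if i = j + (C' + C) then f (j + C') * f' j else 0 := by
  ext i j
  rw [Matrix.mul_apply, Finset.sum_eq_single (j + C')]
  · rw [Matrix.of_apply, Matrix.of_apply, Matrix.of_apply, if_pos rfl,
      show j + C' + C = j + (C' + C) by ring]
    split_ifs with h
    · rfl
    · exact zero_mul _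
  · intro l _ hl
    rw [Matrix.of_apply, Matrix.of_apply, if_neg hl, mul_zero]
  · intro h; exact absurd (Finset.mem_univ _) h

lemma sum_shift (h : ZMod s → ℕ) (t : ZMod s) :
    ∑ k : Fin s, h (((k:ℕ) : ZMod s) + t) = ∑ j : ZMod s, h j := by
  have hbij : Function.Bijective (fun k : Fin s => ((k:ℕ) : ZMod s) + t) := by
    rw [Fintype.bijective_iff_injective_and_card]
    refine ⟨?_, by simp [ZMod.card]⟩
    intro k1 k2 hk
    simp only at hk
    have h1 : ((k1:ℕ) : ZMod s) = ((k2:ℕ) : ZMod s) := add_right_cancel hk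
    have h2 := congrArg ZMod.val h1
    rw [ZMod.val_cast_of_lt k1.isLt, ZMod.val_cast_of_lt k2.isLt] at h2
    exact Fin.ext h2
  exact Fintype.sum_bijective _ hbij _ _ (fun k => rfl)

lemma neg_pow_combine (hodd : Odd s) (X Y δ : ℕ) (hδ : δ = 0 ∨ δ = 1) (g g' : Fin s → ℕ) :
    (-1 : ℂ) ^ ((X + Y + δ) % 2 + ∑ k : Fin s, ((g k + g' k + δ) % 2))
      = (-1) ^ (X + ∑ k : Fin s, g k) * (-1) ^ (Y + ∑ k : Fin s, g' k) := by
  rw [← pow_add]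
  apply pow_neg_one_congr
  have h1 : (∑ k : Fin s, ((g k + g' k + δ) % 2)) % 2
      = (∑ k : Fin s, (g k + g' k + δ)) % 2 := (Finset.sum_nat_mod _ _ _).symm
  have h2 : ∑ k : Fin s, (g k + g' k + δ)
      = (∑ k : Fin s, g k) + (∑ k : Fin s, g' k) + s * δ := by
    rw [Finset.sum_add_distrib, Finset.sum_add_distrib, Finset.sum_const, Finset.card_univ,
      Fintype.card_fin, smul_eq_mul]
  obtain ⟨r, hr⟩ := hodd
  rcases hδ with rfl | rfl <;> omega

lemma half_cast (hodd : Odd s) (m m' : ℕ) (h2s : 2*s < m + m') :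
    (((m + m' - 2*s) * ((s-1)/2) : ℕ) : ZMod s)
      = ((m * ((s-1)/2) : ℕ) : ZMod s) + ((m' * ((s-1)/2) : ℕ) : ZMod s) := by
  have hsp := spos s
  have hd : 2 * ((s-1)/2) = s - 1 := by obtain ⟨r, hr⟩ := hodd; omega
  have h3 : s * (s-1) = (2*s) * ((s-1)/2) := by
    calc s * (s-1) = s * (2 * ((s-1)/2)) := by rw [hd]
    _ = (2*s) * ((s-1)/2) := by ring
  have key : (m + m' - 2*s) * ((s-1)/2) + s * (s-1) = m * ((s-1)/2) + m' * ((s-1)/2) := by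
    rw [h3, ← add_mul, Nat.sub_add_cancel (by omega), add_mul]
  calc (((m + m' - 2*s) * ((s-1)/2) : ℕ) : ZMod s)
      = (((m + m' - 2*s) * ((s-1)/2) + s * (s-1) : ℕ) : ZMod s) := by
        push_cast [ZMod.natCast_self]; ring
    _ = ((m * ((s-1)/2) + m' * ((s-1)/2) : ℕ) : ZMod s) := by rw [key]
    _ = _ := by push_cast; ring

lemma cast_s_sub_one : ((s - 1 : ℕ) : ZMod s) = -1 := by
  have hsp := spos s
  have h : ((s - 1 : ℕ) : ZMod s) + 1 = 0 := by
    rw [show ((s - 1 : ℕ) : ZMod s) + 1 = ((s - 1 + 1 : ℕ) : ZMod s) by push_cast; ring,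
      Nat.sub_add_cancel (by omega), ZMod.natCast_self]
  linear_combination h

lemma argshift (hodd : Odd s) (m' : ℕ) (j : ZMod s) :
    2 - 2*(j + ((m' * ((s-1)/2) : ℕ) : ZMod s)) = (2 - 2*j) + ((m' : ℕ) : ZMod s) := by
  have hd : 2 * ((s-1)/2) = s - 1 := by obtain ⟨r, hr⟩ := hodd; omega
  have hC : (2 : ZMod s) * ((m' * ((s-1)/2) : ℕ) : ZMod s) = -((m' : ℕ) : ZMod s) := by
    calc (2 : ZMod s) * ((m' * ((s-1)/2) : ℕ) : ZMod s)
        = ((2 * (m' * ((s-1)/2)) : ℕ) : ZMod s) := by push_cast; ring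
      _ = ((m' * (s - 1) : ℕ) : ZMod s) := by
          rw [show 2 * (m' * ((s-1)/2)) = m' * (2 * ((s-1)/2)) by ring, hd]
      _ = ((m' : ℕ) : ZMod s) * ((s - 1 : ℕ) : ZMod s) := by push_cast; ring
      _ = -((m' : ℕ) : ZMod s) := by rw [cast_s_sub_one]; ring
  linear_combination -hC

lemma two_unit (hodd : Odd s) : IsUnit (2 : ZMod s) := by
  have : ((2 : ℕ) : ZMod s) = (2 : ZMod s) := by push_cast; ring
  rw [← this, ZMod.isUnit_iff_coprime]
  exact Nat.coprime_two_left.mpr hodd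

lemma cond_one (hodd : Odd s) (j : ZMod s) : (2 - 2*j = 0) ↔ j = 1 := by
  constructor
  · intro h
    have h2 : (2 : ZMod s) * (1 - j) = 0 := by linear_combination h
    have h3 : (1 : ZMod s) - j = 0 := ((two_unit s hodd).mul_right_eq_zero).mp h2
    linear_combination -h3
  · rintro rfl; ring

end MatrixPart

end Stmt11Aux


/-- A square complex matrix is diagonalizable if it is similar to a diagonal matrix. -/
def IsDiagonalizable {n : Type*} [Fintype n] [DecidableEq n] (M : Matrix n n ℂ) : Prop :=
  ∃ P : Matrix n n ℂ, IsUnit P ∧ (P⁻¹ * M * P).IsDiag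

lemma Stmt11Aux.not_diagonalizable {n : Type*} [Fintype n] [DecidableEq n] {M : Matrix n n ℂ}
    (hM2 : M * M = 0) (hM : M ≠ 0) : ¬ IsDiagonalizable M := by
  rintro ⟨P, hP, hdiag⟩
  have hPd : IsUnit P.det := (Matrix.isUnit_iff_isUnit_det P).mp hP
  have hPP : P * P⁻¹ = 1 := Matrix.mul_nonsing_inv P hPd
  have h1 : (P⁻¹ * M * P) * (P⁻¹ * M * P) = 0 := by
    have e : (P⁻¹ * M * P) * (P⁻¹ * M * P) = P⁻¹ * (M * ((P * P⁻¹) * (M * P))) := by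
      simp only [Matrix.mul_assoc]
    rw [e, hPP, Matrix.one_mul, ← Matrix.mul_assoc M M P, hM2, Matrix.zero_mul,
      Matrix.mul_zero]
  have hDzero : P⁻¹ * M * P = 0 := by
    ext i j
    rw [Matrix.zero_apply]
    by_cases hij : i = j
    · subst hij
      have h2 := congrFun (congrFun h1 i) i
      rw [Matrix.mul_apply, Matrix.zero_apply] at h2
      rw [Finset.sum_eq_single i] at h2
      · exact mul_self_eq_zero.mp h2
      · intro k _ hk
        rw [hdiag (Ne.symm hk), zero_mul]
      · intro hmem; exact absurd (Finset.mem_univ _) hmem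
    · exact hdiag hij
  apply hM
  have h3 : M = P * (P⁻¹ * M * P) * P⁻¹ := by
    have e : P * (P⁻¹ * M * P) * P⁻¹ = (P * P⁻¹) * (M * (P * P⁻¹)) := by
      simp only [Matrix.mul_assoc]
    rw [e, hPP, Matrix.one_mul, Matrix.mul_one]
  rw [h3, hDzero, Matrix.mul_zero, Matrix.zero_mul]

/-- Let `s ≥ 3` be odd, `a = (2s−1,2s)(4s−1,4s)`, `b = (1,3,…,4s−1,2,4,…,4s)` in `Sym(4s)`,
`R = ⟨a,b⟩`, and `a_k = a^{b^k}`. Every element of `R` can be written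
`x = a₁^{ε₁} ⋯ a_s^{ε_s} b^m` with `ε_k ∈ {0,1}` and `1 ≤ m ≤ 2s`. Define `ρ` on the complex
`s`-dimensional space with basis `(e_i)_{i ∈ ℤ/s}` by
`e_i^{ρ(x)} = (−1)^{−ε_{2−2i} + Σ_{k=1}^{s} ε_k} · e_{i + m(s−1)/2}` (subscripts mod `s`).
Then `ρ` is a representation of `R` and `ρ(ab) + ρ(b) = 2·E_{1,(s+1)/2}`, a nonzero
nilpotent (hence non-diagonalizable) matrix.

Conventions: `Sym(4s)` is realized as `Equiv.Perm (Fin (4s))` (points `0,…,4s−1`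
corresponding to `1,…,4s`); since the paper composes permutations left-to-right while
Mathlib composes right-to-left, products of permutations are reversed
(`a_k = b^k * a * (b^k)⁻¹`, the word `a₁^{ε₁}⋯a_s^{ε_s}b^m` becomes
`b^m * a_s^{ε_s} ⋯ a₁^{ε₁}`, and `ab` becomes `b * a`); correspondingly, the paper's
right-action (row-vector) matrices are transposed, so `ρ(x)` has `(j + m(s−1)/2, j)`-entry
`(−1)^{ε_{2−2j} + Σ_k ε_k}` and `2E_{1,(s+1)/2}` becomes `2E_{(s+1)/2,1}`. -/
theorem stmt11 (s : ℕ) (hs : 3 ≤ s) (hodd : Odd s) [NeZero s]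
    (a b : Equiv.Perm (Fin (4 * s)))
    (ha : a = Equiv.swap ⟨2 * s - 2, by omega⟩ ⟨2 * s - 1, by omega⟩ *
      Equiv.swap ⟨4 * s - 2, by omega⟩ ⟨4 * s - 1, by omega⟩)
    (hb : ∀ i : Fin (4 * s), (b i : ℕ) =
      if (i : ℕ) % 2 = 0 then (if (i : ℕ) = 4 * s - 2 then 1 else (i : ℕ) + 2)
      else (if (i : ℕ) = 4 * s - 1 then 0 else (i : ℕ) + 2))
    (ρ : ↥(Subgroup.closure ({a, b} : Set (Equiv.Perm (Fin (4 * s))))) →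
      Matrix (ZMod s) (ZMod s) ℂ)
    (hρ : ∀ (x : ↥(Subgroup.closure ({a, b} : Set (Equiv.Perm (Fin (4 * s))))))
        (ε : ZMod s → ℕ) (m : ℕ), (∀ j, ε j ≤ 1) → 1 ≤ m → m ≤ 2 * s →
      (x : Equiv.Perm (Fin (4 * s))) = b ^ m *
        (List.ofFn fun k : Fin s =>
          (b ^ (s - (k : ℕ)) * a * (b ^ (s - (k : ℕ)))⁻¹) ^
            (ε ((s - (k : ℕ) : ℕ) : ZMod s))).prod →
      ρ x = Matrix.of fun i j : ZMod s =>
        if i = j + ((m * ((s - 1) / 2) : ℕ) : ZMod s) then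
          (-1 : ℂ) ^ (ε (2 - 2 * j) + ∑ k : Fin s, ε ((k : ℕ) + 1)) else 0) :
    (∀ x y : ↥(Subgroup.closure ({a, b} : Set (Equiv.Perm (Fin (4 * s))))),
      ρ (x * y) = ρ x * ρ y) ∧
    ρ ⟨b * a, Subgroup.mul_mem _ (Subgroup.subset_closure (by simp))
        (Subgroup.subset_closure (by simp))⟩ +
      ρ ⟨b, Subgroup.subset_closure (by simp)⟩ =
      Matrix.single (((s + 1) / 2 : ℕ) : ZMod s) (1 : ZMod s) (2 : ℂ) ∧
    Matrix.single (((s + 1) / 2 : ℕ) : ZMod s) (1 : ZMod s) (2 : ℂ) ≠ 0 ∧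
    IsNilpotent (Matrix.single (((s + 1) / 2 : ℕ) : ZMod s) (1 : ZMod s) (2 : ℂ)) ∧
    ¬ IsDiagonalizable
      (Matrix.single (((s + 1) / 2 : ℕ) : ZMod s) (1 : ZMod s) (2 : ℂ)) := by
  have hne : ((1 : ZMod s)) ≠ (((s + 1) / 2 : ℕ) : ZMod s) := by
    intro h
    have h2 := congrArg ZMod.val h
    rw [ZMod.val_cast_of_lt (show (s+1)/2 < s by omega)] at h2
    rw [show (1 : ZMod s) = ((1 : ℕ) : ZMod s) by push_cast; ring,
      ZMod.val_cast_of_lt (by omega)] at h2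
    omega
  have hM2 : Matrix.single (((s + 1) / 2 : ℕ) : ZMod s) (1 : ZMod s) (2 : ℂ) *
      Matrix.single (((s + 1) / 2 : ℕ) : ZMod s) (1 : ZMod s) (2 : ℂ) = 0 :=
    Matrix.single_mul_single_of_ne (h := hne) ..
  have hMne : Matrix.single (((s + 1) / 2 : ℕ) : ZMod s) (1 : ZMod s) (2 : ℂ) ≠ 0 := by
    intro h
    have h2 := congrFun (congrFun h (((s + 1) / 2 : ℕ) : ZMod s)) (1 : ZMod s)
    rw [Matrix.zero_apply, Matrix.single_apply_same] at h2
    exact two_ne_zero h2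
  have hnil : IsNilpotent (Matrix.single (((s + 1) / 2 : ℕ) : ZMod s)
      (1 : ZMod s) (2 : ℂ)) := by
    refine ⟨2, ?_⟩
    rw [pow_two]
    exact hM2
  refine ⟨?_, ?_, hMne, hnil, Stmt11Aux.not_diagonalizable hM2 hMne⟩
  · -- multiplicativity
    intro x y
    obtain ⟨ε, m, hε, hm1, hm2, hxe⟩ := Stmt11Aux.decomp_closure s hs ha hb x.2
    obtain ⟨ε', m', hε', hm1', hm2', hye⟩ := Stmt11Aux.decomp_closure s hs ha hb y.2
    have hxye : ((x * y : _) : Equiv.Perm (Fin (4 * s)))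
        = b ^ (if m + m' ≤ 2*s then m + m' else m + m' - 2*s) *
          Stmt11Aux.W s a b (fun j => (ε (j + ((m' : ℕ) : ZMod s)) + ε' j
            + (if m + m' ≤ 2*s then 0 else 1)) % 2) := by
      rw [Subgroup.coe_mul]
      exact Stmt11Aux.decomp_mul_eq s hs ha hb hε hε' hxe hye
    have hε'' : ∀ j : ZMod s, (ε (j + ((m' : ℕ) : ZMod s)) + ε' j
        + (if m + m' ≤ 2*s then 0 else 1)) % 2 ≤ 1 :=
      fun j => Nat.lt_succ_iff.mp (Nat.mod_lt _ (by omega))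
    rw [hρ (x * y) _ _ hε'' (by split <;> omega) (by split <;> omega) hxye,
      hρ x ε m hε hm1 hm2 hxe, hρ y ε' m' hε' hm1' hm2' hye,
      Stmt11Aux.matMul s]
    have hsums : ∑ k : Fin s, ε ((((k:ℕ) : ZMod s) + 1) + ((m' : ℕ) : ZMod s))
        = ∑ k : Fin s, ε (((k:ℕ) : ZMod s) + 1) := by
      calc ∑ k : Fin s, ε ((((k:ℕ) : ZMod s) + 1) + ((m' : ℕ) : ZMod s))
          = ∑ k : Fin s, ε (((k:ℕ) : ZMod s) + (1 + ((m' : ℕ) : ZMod s))) := by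
            simp only [add_assoc]
        _ = ∑ j' : ZMod s, ε j' := Stmt11Aux.sum_shift s ε _
        _ = ∑ k : Fin s, ε (((k:ℕ) : ZMod s) + 1) := (Stmt11Aux.sum_shift s ε 1).symm
    by_cases hmm : m + m' ≤ 2*s
    · have hC : (((m + m') * ((s-1)/2) : ℕ) : ZMod s)
          = ((m' * ((s-1)/2) : ℕ) : ZMod s) + ((m * ((s-1)/2) : ℕ) : ZMod s) := by
        push_cast [add_mul]; ring
      simp only [if_pos hmm]
      ext i j
      rw [Matrix.of_apply, Matrix.of_apply, hC]
      split_ifs with h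
      · rw [Stmt11Aux.argshift s hodd m' j,
          Stmt11Aux.neg_pow_combine s hodd (ε ((2 - 2*j) + ((m' : ℕ) : ZMod s)))
            (ε' (2 - 2*j)) 0 (Or.inl rfl)
            (fun k => ε ((((k:ℕ) : ZMod s) + 1) + ((m' : ℕ) : ZMod s)))
            (fun k => ε' (((k:ℕ) : ZMod s) + 1)), hsums]
      · rfl
    · have hC : (((m + m' - 2*s) * ((s-1)/2) : ℕ) : ZMod s)
          = ((m' * ((s-1)/2) : ℕ) : ZMod s) + ((m * ((s-1)/2) : ℕ) : ZMod s) := by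
        rw [Stmt11Aux.half_cast s hodd m m' (by omega)]; ring
      simp only [if_neg hmm]
      ext i j
      rw [Matrix.of_apply, Matrix.of_apply, hC]
      split_ifs with h
      · rw [Stmt11Aux.argshift s hodd m' j,
          Stmt11Aux.neg_pow_combine s hodd (ε ((2 - 2*j) + ((m' : ℕ) : ZMod s)))
            (ε' (2 - 2*j)) 1 (Or.inr rfl)
            (fun k => ε ((((k:ℕ) : ZMod s) + 1) + ((m' : ℕ) : ZMod s)))
            (fun k => ε' (((k:ℕ) : ZMod s) + 1)), hsums]
      · rfl
  · -- the sum of the two representation matrices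
    have h1s : (1:ℕ) ≤ 2*s := by omega
    have hεa : ∀ j : ZMod s, (fun j : ZMod s => if j = (0:ZMod s) then 1 else 0) j ≤ 1 := by
      intro j; by_cases hj : j = 0 <;> simp [hj]
    rw [hρ _ (fun j => if j = 0 then 1 else 0) 1 hεa le_rfl h1s
        (Stmt11Aux.decomp_ba_eq s hs ha hb),
      hρ _ (fun _ => 0) 1 (fun _ => Nat.zero_le _) le_rfl h1s
        (Stmt11Aux.decomp_b_eq s hs ha hb)]
    have hsum1 : (∑ k : Fin s, (if ((((k:ℕ) : ZMod s)) + 1) = 0 then 1 else 0)) = 1 := by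
      rw [Stmt11Aux.sum_shift s (fun j => if j = 0 then 1 else 0) 1,
        Finset.sum_ite_eq' Finset.univ (0 : ZMod s) (fun _ => 1)]
      simp
    have hkey : (((s+1)/2 : ℕ) : ZMod s) = (1 : ZMod s) + ((1 * ((s-1)/2) : ℕ) : ZMod s) := by
      rw [show (s+1)/2 = (s-1)/2 + 1 from by omega]
      push_cast
      ring
    ext i j
    rw [Matrix.add_apply, Matrix.of_apply, Matrix.of_apply]
    simp only [Matrix.single, Matrix.of_apply]
    rw [hsum1]
    by_cases hij : i = j + ((1 * ((s-1)/2) : ℕ) : ZMod s)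
    · rw [if_pos hij, if_pos hij]
      by_cases hj : j = (1 : ZMod s)
      · subst hj
        rw [if_pos (show (2 : ZMod s) - 2*1 = 0 by ring), if_pos ⟨by rw [hkey, hij], rfl⟩]
        norm_num
      · rw [if_neg (fun hc => hj ((Stmt11Aux.cond_one s hodd j).mp hc)),
          if_neg (fun hc => hj hc.2.symm)]
        norm_num
    · rw [if_neg hij, if_neg hij]
      rw [if_neg ?_]
      · norm_num
      · rintro ⟨h1, h2⟩
        exact hij (by rw [← h2, ← h1, hkey])
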